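/- Let N be a complete normal subgroup of an n-dimensional crystallographic group Γ, and let V = Span(N). Then Γ/N acts effectively as a discrete group of isometries of the Euclidean space E^n/V via (N(b+B))(V+x) = V + b + Bx. -/

import Mathlib

noncomputable section

/-- Euclidean `n`-space. -/
abbrev E (n : ℕ) := EuclideanSpace ℝ (Fin n)

/-- An isometry `a + A` of `E n`, acting by `x ↦ a + A x`, with `A` a linear isometry
(an element of `O(n)`). -/
@[ext] structure Iso (n : ℕ) where
  a : E n
  A : E n ≃ₗᵢ[ℝ] E n

namespace Iso

variable {n : ℕ}

instance : Mul (Iso n) := ⟨fun x y => ⟨x.a + x.A y.a, y.A.trans x.A⟩⟩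
instance : One (Iso n) := ⟨⟨0, LinearIsometryEquiv.refl ℝ (E n)⟩⟩
instance : Inv (Iso n) := ⟨fun x => ⟨-(x.A.symm x.a), x.A.symm⟩⟩

@[simp] lemma mul_a (x y : Iso n) : (x * y).a = x.a + x.A y.a := rfl
@[simp] lemma mul_A (x y : Iso n) : (x * y).A = y.A.trans x.A := rfl
@[simp] lemma one_a : (1 : Iso n).a = 0 := rfl
@[simp] lemma one_A : (1 : Iso n).A = LinearIsometryEquiv.refl ℝ (E n) := rfl
@[simp] lemma inv_a (x : Iso n) : (x⁻¹).a = -(x.A.symm x.a) := rfl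
@[simp] lemma inv_A (x : Iso n) : (x⁻¹).A = x.A.symm := rfl

/-- The group of isometries of `E n`, with composition as multiplication. -/
instance : Group (Iso n) where
  mul_assoc x y z := by
    refine Iso.ext ?_ ?_
    · simp [add_assoc]
    · ext v; simp
  one_mul x := by refine Iso.ext ?_ ?_ <;> simp
  mul_one x := by refine Iso.ext ?_ ?_ <;> simp
  inv_mul_cancel x := by
    refine Iso.ext ?_ ?_
    · simp
    · ext v; simp

/-- The action of the isometry `a + A` on a point `x` of `E n`: `x ↦ a + A x`. -/
def act (g : Iso n) (x : E n) : E n := g.a + g.A x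

/-- The translation `a + I`. -/
def trans (a : E n) : Iso n := ⟨a, LinearIsometryEquiv.refl ℝ (E n)⟩

/-- `g` is a translation if its linear part is the identity. -/
def IsTranslation (g : Iso n) : Prop := g.A = LinearIsometryEquiv.refl ℝ (E n)

/-- The subgroup of all translations of `E n`. -/
def translations (n : ℕ) : Subgroup (Iso n) where
  carrier := {g | g.IsTranslation}
  mul_mem' := by
    intro x y hx hy
    simp only [Set.mem_setOf_eq, IsTranslation] at *
    rw [mul_A, hx, hy]; simp
  one_mem' := rfl
  inv_mem' := by
    intro x hx
    simp only [Set.mem_setOf_eq, IsTranslation] at *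
    rw [inv_A, hx]; rfl

/-- The set of translation vectors of a set `S` of isometries:
`{a : E n | a + I ∈ S}`. -/
def transVecs (S : Set (Iso n)) : Set (E n) := {a | Iso.trans a ∈ S}

/-- `Span(S)`: the real linear span of the translation vectors of `S`. -/
def spanS (S : Set (Iso n)) : Submodule ℝ (E n) :=
  Submodule.span ℝ (transVecs S)

/-- A crystallographic (space) group: a group of isometries of `E n` that acts
properly discontinuously (equivalently, is discrete) and cocompactly. -/
def IsCrystallographic (Γ : Subgroup (Iso n)) : Prop :=
  (∀ K : Set (E n), IsCompact K →
      {g : Iso n | g ∈ Γ ∧ ((Iso.act g '' K) ∩ K).Nonempty}.Finite) ∧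
  ∃ K : Set (E n), IsCompact K ∧ ∀ x : E n, ∃ g ∈ Γ, g.act x ∈ K

/-- `N` is a normal subgroup of `Γ`. -/
def IsNormalIn (N Γ : Subgroup (Iso n)) : Prop :=
  N ≤ Γ ∧ ∀ g ∈ Γ, ∀ x ∈ N, g * x * g⁻¹ ∈ N

/-- The completion of `S` in `Γ`:
`S̄ = {b+B ∈ Γ : b ∈ Span(S) and Span(S)ᗮ ⊆ Fix(B)}`. -/
def completion (Γ : Subgroup (Iso n)) (S : Set (Iso n)) : Set (Iso n) :=
  {g | g ∈ Γ ∧ g.a ∈ spanS S ∧ ∀ x ∈ (spanS S)ᗮ, g.A x = x}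

end Iso

namespace Iso

variable {n : ℕ}

lemma act_mul (g h : Iso n) (x : E n) : (g * h).act x = g.act (h.act x) := by
  simp [act, map_add, add_assoc]

@[simp] lemma trans_a (a : E n) : (trans a).a = a := rfl
@[simp] lemma trans_A (a : E n) : (trans a).A = LinearIsometryEquiv.refl ℝ (E n) := rfl

lemma trans_mul (a b : E n) : trans a * trans b = trans (a + b) := by
  refine Iso.ext (by simp) ?_
  ext v; simp

lemma trans_zero : trans (0 : E n) = 1 := rfl

@[simp] lemma refl_symm :
    (LinearIsometryEquiv.refl ℝ (E n)).symm = LinearIsometryEquiv.refl ℝ (E n) :=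
  LinearIsometryEquiv.ext fun v => (LinearIsometryEquiv.refl ℝ (E n)).symm_apply_apply v

lemma trans_inv (a : E n) : (trans a)⁻¹ = trans (-a) := by
  refine Iso.ext (by simp) ?_
  ext v; simp

lemma conj_trans (g : Iso n) (a : E n) : g * trans a * g⁻¹ = trans (g.A a) := by
  refine Iso.ext ?_ ?_
  · simp [add_assoc, ← map_add]
  · ext v; simp

/-- The translation vectors of a subgroup form an additive subgroup. -/
def tvecs (N : Subgroup (Iso n)) : AddSubgroup (E n) where
  carrier := transVecs (N : Set (Iso n))
  add_mem' := by
    intro a b ha hb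
    simpa [transVecs, ← trans_mul] using mul_mem (show trans a ∈ N from ha) (show trans b ∈ N from hb)
  zero_mem' := by
    simpa [transVecs, trans_zero] using one_mem N
  neg_mem' := by
    intro a ha
    simpa [transVecs, ← trans_inv] using inv_mem (show trans a ∈ N from ha)

lemma spanS_A_mem {Γ N : Subgroup (Iso n)} (hN : IsNormalIn N Γ) {g : Iso n} (hg : g ∈ Γ)
    {v : E n} (hv : v ∈ spanS (N : Set (Iso n))) : g.A v ∈ spanS (N : Set (Iso n)) := by
  induction hv using Submodule.span_induction with
  | mem x hx =>
      refine Submodule.subset_span ?_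
      have := hN.2 g hg (trans x) hx
      rwa [conj_trans] at this
  | zero => simp
  | add x y _ _ hx hy => simpa [map_add] using Submodule.add_mem _ hx hy
  | smul c x _ hx => simpa [map_smul] using Submodule.smul_mem _ c hx

lemma spanS_A_mem_orth {Γ N : Subgroup (Iso n)} (hN : IsNormalIn N Γ) {g : Iso n} (hg : g ∈ Γ)
    {v : E n} (hv : v ∈ (spanS (N : Set (Iso n)))ᗮ) :
    g.A v ∈ (spanS (N : Set (Iso n)))ᗮ := by
  rw [Submodule.mem_orthogonal] at hv ⊢
  intro u hu
  have hginv : g⁻¹ ∈ Γ := inv_mem hg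
  have hu' : g.A.symm u ∈ spanS (N : Set (Iso n)) := by
    have := spanS_A_mem (g := g⁻¹) hN hginv hu
    simpa using this
  calc
    inner ℝ u (g.A v) = inner ℝ (g.A (g.A.symm u)) (g.A v) := by rw [g.A.apply_symm_apply]
    _ = inner (𝕜 := ℝ) (g.A.symm u) v := g.A.inner_map_map _ _
    _ = 0 := hv _ hu'

/-- Covering lemma: every vector of `Span N` is within a bounded distance of a
translation vector of `N`. -/
lemma exists_cover (N : Subgroup (Iso n)) :
    ∃ R : ℝ, 0 ≤ R ∧ ∀ v ∈ spanS (N : Set (Iso n)),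
      ∃ ℓ : E n, trans ℓ ∈ N ∧ ‖v - ℓ‖ ≤ R := by
  obtain ⟨s, hst, hsp, hli⟩ := exists_linearIndependent ℝ (transVecs (N : Set (Iso n)))
  have hfin : s.Finite := hli.setFinite
  refine ⟨∑ i ∈ hfin.toFinset, ‖i‖, Finset.sum_nonneg fun i _ => norm_nonneg i, ?_⟩
  intro v hv
  rw [spanS, ← hsp, ← hfin.coe_toFinset] at hv
  obtain ⟨f, -, hf⟩ := Submodule.mem_span_finset.1 hv
  refine ⟨∑ i ∈ hfin.toFinset, (⌊f i⌋ : ℝ) • i, ?_, ?_⟩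
  · have : (∑ i ∈ hfin.toFinset, (⌊f i⌋ : ℝ) • i) ∈ tvecs N := by
      refine AddSubgroup.sum_mem _ fun i hi => ?_
      rw [Int.cast_smul_eq_zsmul]
      exact AddSubgroup.zsmul_mem _ (hst (hfin.mem_toFinset.1 hi)) _
    exact this
  · rw [← hf, ← Finset.sum_sub_distrib]
    calc ‖∑ i ∈ hfin.toFinset, (f i • i - (⌊f i⌋ : ℝ) • i)‖
        ≤ ∑ i ∈ hfin.toFinset, ‖f i • i - (⌊f i⌋ : ℝ) • i‖ := norm_sum_le _ _
      _ ≤ ∑ i ∈ hfin.toFinset, ‖i‖ := by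
          refine Finset.sum_le_sum fun i _ => ?_
          rw [← sub_smul, norm_smul, Real.norm_eq_abs]
          have h1 : |f i - (⌊f i⌋ : ℝ)| ≤ 1 := by
            rw [Int.self_sub_floor, abs_of_nonneg (Int.fract_nonneg _)]
            exact (Int.fract_lt_one _).le
          nlinarith [norm_nonneg i]

end Iso

/-- The isometry of `E n / V ≅ Vᗮ` induced by `g`, where `V = Span(N)`:
`V + x ↦ V + g.a + g.A x`, realized on `Vᗮ` via orthogonal projection. -/
noncomputable def quotAct {n : ℕ} (N : Subgroup (Iso n)) (g : Iso n) (x : E n) : E n :=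
  (Submodule.orthogonalProjectionOnto (Iso.spanS (N : Set (Iso n)))ᗮ (g.act x) : E n)

/-- If `N` is a complete normal subgroup of a crystallographic group `Γ`
and `V = Span(N)`, then `Γ/N` acts effectively as a discrete group of isometries of the
Euclidean space `E n / V ≅ Vᗮ` via `(N(b+B))(V+x) = V + b + Bx`: the action is by
isometries, its kernel is exactly `N` (effectiveness of `Γ/N`), and it is properly
discontinuous modulo `N` (discreteness of `Γ/N`). -/
theorem stmt6 {n : ℕ} (Γ N : Subgroup (Iso n)) (hΓ : Iso.IsCrystallographic Γ)
    (hN : Iso.IsNormalIn N Γ)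
    (hcomplete : Iso.completion Γ (N : Set (Iso n)) = (N : Set (Iso n))) :
    (∀ g ∈ Γ, ∀ x ∈ (Iso.spanS (N : Set (Iso n)))ᗮ, ∀ y ∈ (Iso.spanS (N : Set (Iso n)))ᗮ,
        dist (quotAct N g x) (quotAct N g y) = dist x y) ∧
    (∀ g ∈ Γ, (∀ x ∈ (Iso.spanS (N : Set (Iso n)))ᗮ, quotAct N g x = x) → g ∈ N) ∧
    (∀ K : Set (E n), IsCompact K →
        K ⊆ ((Iso.spanS (N : Set (Iso n)))ᗮ : Set (E n)) →
        ∃ F : Finset (Iso n), ∀ g ∈ Γ,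
          ((quotAct N g '' K) ∩ K).Nonempty → ∃ f ∈ F, f⁻¹ * g ∈ N) := by
  set V := Iso.spanS (N : Set (Iso n)) with hV
  refine ⟨?_, ?_, ?_⟩
  · intro g hg x hx y hy
    have hxy : g.A (x - y) ∈ Vᗮ :=
      Iso.spanS_A_mem_orth hN hg (Submodule.sub_mem _ hx hy)
    have hsub : quotAct N g x - quotAct N g y = g.A (x - y) := by
      rw [quotAct, quotAct, ← Submodule.coe_sub, ← map_sub]
      have h1 : g.act x - g.act y = g.A (x - y) := by
        show (g.a + g.A x) - (g.a + g.A y) = _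
        rw [map_sub]; abel
      rw [h1]; exact Submodule.starProjection_eq_self_iff.2 hxy
    rw [dist_eq_norm, dist_eq_norm, hsub, g.A.norm_map]
  · intro g hg hfix
    have h0 := hfix 0 (Submodule.zero_mem _)
    have hPa : ((Submodule.orthogonalProjectionOnto Vᗮ g.a : ↥Vᗮ) : E n) = 0 := by
      simpa [quotAct, Iso.act] using h0
    have ha : g.a ∈ V := by
      have h2 : Submodule.orthogonalProjectionOnto Vᗮ g.a = 0 := by exact_mod_cast hPa
      rw [Submodule.orthogonalProjectionOnto_eq_zero_iff, Submodule.orthogonal_orthogonal] at h2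
      exact h2
    have hA : ∀ x ∈ Vᗮ, g.A x = x := by
      intro x hx
      have hAx : g.A x ∈ Vᗮ := Iso.spanS_A_mem_orth hN hg hx
      have hqa := hfix x hx
      rw [quotAct] at hqa
      have hact : g.act x = g.a + g.A x := rfl
      rw [hact, map_add, Submodule.coe_add, hPa,
        (show (Submodule.orthogonalProjectionOnto Vᗮ (g.A x) : E n) = g.A x from Submodule.starProjection_eq_self_iff.2 hAx), zero_add] at hqa
      exact hqa
    have hmem : g ∈ Iso.completion Γ (N : Set (Iso n)) := ⟨hg, ha, hA⟩
    rw [hcomplete] at hmem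
    exact hmem
  · intro K hK _hKW
    obtain ⟨R, hR0, hcov⟩ := Iso.exists_cover N
    have hK₃ : IsCompact (Metric.cthickening R K) := hK.cthickening
    have hKK₃ : K ⊆ Metric.cthickening R K := Metric.self_subset_cthickening K
    have hfin := hΓ.1 _ hK₃
    refine ⟨hfin.toFinset, ?_⟩
    rintro g hg ⟨z, ⟨x, hxK, rfl⟩, hzK⟩
    have hvV : g.act x - quotAct N g x ∈ V := by
      have h3 := Submodule.sub_starProjection_mem_orthogonal (K := Vᗮ) (g.act x)
      rwa [Submodule.orthogonal_orthogonal] at h3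
    obtain ⟨ℓ, hℓN, hℓ⟩ := hcov _ hvV
    set g' := (Iso.trans ℓ)⁻¹ * g with hg'def
    have hg' : g' ∈ Γ := mul_mem (inv_mem (hN.1 hℓN)) hg
    have hact' : g'.act x = -ℓ + g.act x := by
      rw [hg'def, Iso.act_mul, Iso.trans_inv]
      simp [Iso.act, Iso.trans]
    have hmem : g'.act x ∈ Metric.cthickening R K := by
      refine Metric.mem_cthickening_of_dist_le (g'.act x) (quotAct N g x) R K hzK ?_
      rw [dist_eq_norm, hact']
      have h4 : -ℓ + g.act x - quotAct N g x = (g.act x - quotAct N g x) - ℓ := by abel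
      rw [h4]
      exact hℓ
    have hg'F : g' ∈ hfin.toFinset := by
      rw [Set.Finite.mem_toFinset]
      exact ⟨hg', ⟨g'.act x, ⟨x, hKK₃ hxK, rfl⟩, hmem⟩⟩
    refine ⟨g', hg'F, ?_⟩
    have h5 : g'⁻¹ * g = g'⁻¹ * Iso.trans ℓ * g'⁻¹⁻¹ := by
      rw [hg'def]; group
    rw [h5]
    exact hN.2 g'⁻¹ (inv_mem hg') _ hℓN
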